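/- If G is a simple graph on n ≥ 2 vertices with domination number γ ≥ 2, then the second smallest Laplacian eigenvalue of G satisfies λ₂(G) ≤ n - γ. -/

import Mathlib

open SimpleGraph Finset Matrix

/-- Largest eigenvalue of a real matrix, as the supremum of its (real) eigenvalues. -/
noncomputable def maxEig {V : Type*} [Fintype V] (A : Matrix V V ℝ) : ℝ :=
  sSup {μ : ℝ | ∃ v : V → ℝ, v ≠ 0 ∧ A.mulVec v = μ • v}

/-- The eigenvalues of a real matrix with multiplicity, sorted increasingly
(the real roots of the characteristic polynomial). -/
noncomputable def eigsSorted {V : Type*} [Fintype V] [DecidableEq V]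
    (A : Matrix V V ℝ) : List ℝ :=
  A.charpoly.roots.sort (· ≤ ·)

/-- The second smallest eigenvalue (with multiplicity) of a real matrix. -/
noncomputable def secondEig {V : Type*} [Fintype V] [DecidableEq V]
    (A : Matrix V V ℝ) : ℝ :=
  (eigsSorted A).getD 1 0

/-- `G` has no triangles. -/
def TriangleFree {V : Type*} (G : SimpleGraph V) : Prop :=
  ∀ a b c : V, G.Adj a b → G.Adj b c → G.Adj c a → False

/-- `G` has no 4-cycles. -/
def C4Free {V : Type*} (G : SimpleGraph V) : Prop :=
  ∀ a b c d : V, a ≠ c → b ≠ d →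
    G.Adj a b → G.Adj b c → G.Adj c d → G.Adj d a → False

/-- `X` is a dominating set of `G`. -/
def IsDominatingSet {V : Type*} (G : SimpleGraph V) (X : Finset V) : Prop :=
  ∀ v : V, v ∉ X → ∃ u ∈ X, G.Adj u v

/-- The domination number of `G`. -/
noncomputable def domNum {V : Type*} [Fintype V] (G : SimpleGraph V) : ℕ :=
  sInf {k : ℕ | ∃ X : Finset V, IsDominatingSet G X ∧ X.card = k}

/-- Number of edges between `X` and its complement. -/
def crossEdges {V : Type*} [Fintype V] [DecidableEq V] (G : SimpleGraph V)
    [DecidableRel G.Adj] (X : Finset V) : ℕ :=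
  (Finset.univ.filter fun p : V × V => p.1 ∈ X ∧ p.2 ∉ X ∧ G.Adj p.1 p.2).card

open Polynomial in
lemma my_charpoly_eq_prod {m : ℕ} {A : Matrix (Fin m) (Fin m) ℝ} (hA : A.IsHermitian) :
    A.charpoly = ∏ i, (X - C (hA.eigenvalues i)) := by
  apply Polynomial.funext
  intro r
  have h1 : A.charpoly.eval r = (r • (1 : Matrix (Fin m) (Fin m) ℝ) - A).det := by
    rw [Matrix.charpoly, eval_det, matPolyEquiv_charmatrix]
    congr 1
    simp [Matrix.scalar, Matrix.smul_eq_diagonal_mul, algebraMap]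
  set U : Matrix (Fin m) (Fin m) ℝ := (hA.eigenvectorUnitary : Matrix (Fin m) (Fin m) ℝ) with hU
  have hUU : U * star U = 1 := Matrix.mem_unitaryGroup_iff.mp hA.eigenvectorUnitary.2
  have hUU' : star U * U = 1 := Matrix.mem_unitaryGroup_iff'.mp hA.eigenvectorUnitary.2
  have hD : r • (1 : Matrix (Fin m) (Fin m) ℝ) - A
      = U * (r • (1 : Matrix (Fin m) (Fin m) ℝ) - diagonal (RCLike.ofReal ∘ hA.eigenvalues))
        * star U := by
    rw [Matrix.mul_sub, Matrix.sub_mul]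
    congr 1
    · rw [Matrix.mul_smul, Matrix.mul_one, Matrix.smul_mul, hUU]
    · exact hA.spectral_theorem
  have h2 : (r • (1 : Matrix (Fin m) (Fin m) ℝ) - diagonal (RCLike.ofReal ∘ hA.eigenvalues))
      = diagonal (fun i => r - hA.eigenvalues i) := by
    rw [smul_eq_diagonal_mul]
    ext i j
    by_cases h : i = j <;> simp [h, diagonal]
  have h3 : (r • (1 : Matrix (Fin m) (Fin m) ℝ) - A).det = ∏ i, (r - hA.eigenvalues i) := by
    rw [hD, h2, det_mul, det_mul, mul_comm, ← mul_assoc, ← det_mul, hUU', det_one, one_mul,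
      det_diagonal]
  rw [h1, h3, eval_prod]
  simp

open Polynomial in
lemma my_roots_eq {m : ℕ} {A : Matrix (Fin m) (Fin m) ℝ} (hA : A.IsHermitian) :
    A.charpoly.roots = Multiset.map hA.eigenvalues Finset.univ.val := by
  rw [my_charpoly_eq_prod hA]
  have h : (∏ i, (X - C (hA.eigenvalues i)))
      = ((Multiset.map hA.eigenvalues Finset.univ.val).map fun a => X - C a).prod := by
    rw [Multiset.map_map]
    rfl
  rw [h, Polynomial.roots_multiset_prod_X_sub_C]

lemma my_sorted_getD_le {B : ℝ} : ∀ {l : List ℝ}, l.Pairwise (· ≤ ·) →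
    2 ≤ (l.filter (fun x => decide (x ≤ B))).length → l.getD 1 0 ≤ B
  | [], _, h => by simp at h
  | [a], _, h => by by_cases hab : a ≤ B <;> simp [hab] at h
  | a :: b :: t, hl, h => by
      by_contra hb
      push_neg at hb
      have hgd : (a :: b :: t).getD 1 0 = b := rfl
      rw [hgd] at hb
      have hsort := List.pairwise_cons.mp hl
      have hsort2 := List.pairwise_cons.mp hsort.2
      have hnil : (b :: t).filter (fun x => decide (x ≤ B)) = [] := by
        rw [List.filter_eq_nil_iff]
        intro x hx
        have hbx : b ≤ x := by
          rcases List.mem_cons.mp hx with h1 | h1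
          · exact h1 ▸ le_refl b
          · exact hsort2.1 x h1
        simpa using not_le.mpr (lt_of_lt_of_le hb hbx)
      rw [List.filter_cons, hnil] at h
      by_cases hab : a ≤ B <;> simp [hab] at h

lemma my_secondEig_le {m : ℕ} {A : Matrix (Fin m) (Fin m) ℝ} (hA : A.IsHermitian) {B : ℝ}
    (h2 : 2 ≤ (Finset.univ.filter (fun i => hA.eigenvalues i ≤ B)).card) :
    secondEig A ≤ B := by
  unfold secondEig eigsSorted
  apply my_sorted_getD_le (Multiset.pairwise_sort _ _)
  have hlen : ((A.charpoly.roots.sort (· ≤ ·)).filter (fun x => decide (x ≤ B))).length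
      = (Finset.univ.filter (fun i => hA.eigenvalues i ≤ B)).card := by
    rw [← List.countP_eq_length_filter]
    have : (A.charpoly.roots.sort (· ≤ ·)).countP (fun x => decide (x ≤ B))
        = Multiset.countP (fun x => x ≤ B) A.charpoly.roots := by
      rw [← Multiset.coe_countP, Multiset.sort_eq]
    rw [this, my_roots_eq hA, Multiset.countP_map]
    rfl
  omega

lemma my_dot_eq {m : ℕ} {A : Matrix (Fin m) (Fin m) ℝ} (hA : A.IsHermitian) (y : Fin m → ℝ) :
    y ⬝ᵥ (A *ᵥ y) = (∑ i, hA.eigenvalues i *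
      ((star (hA.eigenvectorUnitary : Matrix (Fin m) (Fin m) ℝ) *ᵥ y) i)^2) ∧
    y ⬝ᵥ y = ∑ i, ((star (hA.eigenvectorUnitary : Matrix (Fin m) (Fin m) ℝ) *ᵥ y) i)^2 := by
  set U : Matrix (Fin m) (Fin m) ℝ := (hA.eigenvectorUnitary : Matrix (Fin m) (Fin m) ℝ) with hU
  have hUU : U * star U = 1 := Matrix.mem_unitaryGroup_iff.mp hA.eigenvectorUnitary.2
  have hstar : star U = Uᵀ := by
    rw [Matrix.star_eq_conjTranspose, Matrix.conjTranspose_eq_transpose_of_trivial]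
  have hc : star U *ᵥ y = y ᵥ* U := by rw [hstar, Matrix.mulVec_transpose]
  set c : Fin m → ℝ := star U *ᵥ y with hcdef
  have hdot : ∀ w : Fin m → ℝ, y ⬝ᵥ (U *ᵥ w) = c ⬝ᵥ w := fun w => by
    rw [Matrix.dotProduct_mulVec, ← hc]
  constructor
  · conv_lhs => rw [hA.spectral_theorem, Unitary.conjStarAlgAut_apply, mul_assoc, ← Matrix.mulVec_mulVec]
    rw [hdot, ← Matrix.mulVec_mulVec, ← hcdef]
    simp only [dotProduct, mulVec_diagonal]
    refine Finset.sum_congr rfl fun i _ => ?_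
    simp [Function.comp]
    ring
  · have h1 : c ⬝ᵥ c = (c ᵥ* star U) ⬝ᵥ y := by rw [← Matrix.dotProduct_mulVec, hcdef]
    have h2 : c ᵥ* star U = (U * star U) *ᵥ y := by
      rw [← Matrix.mulVec_transpose, hstar, Matrix.transpose_transpose, hcdef,
        Matrix.mulVec_mulVec, hstar]
    rw [show (∑ i, (c i)^2) = c ⬝ᵥ c by simp [dotProduct, sq], h1, h2, hUU, Matrix.one_mulVec]

lemma my_key {m : ℕ} {A : Matrix (Fin m) (Fin m) ℝ} (hA : A.IsHermitian) {B : ℝ} {y : Fin m → ℝ}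
    (hy : y ≠ 0)
    (hperp : ∀ i, hA.eigenvalues i ≤ B →
      (star (hA.eigenvectorUnitary : Matrix (Fin m) (Fin m) ℝ) *ᵥ y) i = 0) :
    B * (y ⬝ᵥ y) < y ⬝ᵥ (A *ᵥ y) := by
  obtain ⟨hq, hn⟩ := my_dot_eq hA y
  set c : Fin m → ℝ := star (hA.eigenvectorUnitary : Matrix (Fin m) (Fin m) ℝ) *ᵥ y with hcdef
  have hy2 : 0 < y ⬝ᵥ y := by
    have hj : ∃ j, y j ≠ 0 := by
      by_contra h; push_neg at h; exact hy (funext h)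
    obtain ⟨j, hj⟩ := hj
    have : (0:ℝ) < ∑ i, y i * y i :=
      Finset.sum_pos' (fun i _ => mul_self_nonneg _)
        ⟨j, Finset.mem_univ j, mul_self_pos.mpr hj⟩
    simpa [dotProduct] using this
  have hex : ∃ j, c j ≠ 0 := by
    by_contra h; push_neg at h
    rw [hn] at hy2
    simp [h] at hy2
  obtain ⟨j, hj⟩ := hex
  rw [hq, hn, Finset.mul_sum]
  apply Finset.sum_lt_sum
  · intro i _
    by_cases hi : hA.eigenvalues i ≤ B
    · simp [hperp i hi]
    · exact mul_le_mul_of_nonneg_right (not_le.mp hi).le (sq_nonneg _)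
  · refine ⟨j, Finset.mem_univ j, ?_⟩
    have hij : B < hA.eigenvalues j := by
      by_contra h; push_neg at h; exact hj (hperp j h)
    exact mul_lt_mul_of_pos_right hij (by positivity)

theorem stmt_7 {n : ℕ} (hn : 2 ≤ n) (G : SimpleGraph (Fin n)) [DecidableRel G.Adj]
    (hγ : 2 ≤ domNum G) :
    secondEig (G.lapMatrix ℝ) ≤ (n : ℝ) - (domNum G : ℝ) := by
  classical
  have hA : (G.lapMatrix ℝ).IsHermitian := (SimpleGraph.posSemidef_lapMatrix ℝ G).1
  set L : Matrix (Fin n) (Fin n) ℝ := G.lapMatrix ℝ with hLdef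
  set B : ℝ := (n : ℝ) - (domNum G : ℝ) with hB
  -- domination number bounds
  have hdomn : domNum G ≤ n := by
    have hd : IsDominatingSet G Finset.univ := fun v hv => absurd (Finset.mem_univ v) hv
    exact Nat.sInf_le ⟨Finset.univ, hd, by simp⟩
  have hB0 : (0:ℝ) ≤ B := by
    rw [hB]
    have := (Nat.cast_le (α := ℝ)).mpr hdomn
    push_cast at this ⊢
    linarith
  obtain ⟨a, -, ha⟩ := Finset.exists_max_image (Finset.univ : Finset (Fin n)) (fun v => G.degree v)
    ⟨⟨0, by omega⟩, Finset.mem_univ _⟩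
  have hbex : ∃ b, b ≠ a ∧ ¬ G.Adj a b := by
    by_contra h
    push_neg at h
    have hdom : IsDominatingSet G {a} := by
      intro v hv
      exact ⟨a, Finset.mem_singleton_self a, h v (by simpa using hv)⟩
    have : domNum G ≤ 1 := Nat.sInf_le ⟨{a}, hdom, Finset.card_singleton a⟩
    omega
  obtain ⟨b, hba, hnadj⟩ := hbex
  have hdega : domNum G ≤ n - G.degree a := by
    have hdom : IsDominatingSet G (Finset.univ \ G.neighborFinset a) := by
      intro v hv
      simp only [Finset.mem_sdiff, Finset.mem_univ, true_and, not_not] at hv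
      refine ⟨a, ?_, (G.mem_neighborFinset a v).mp hv⟩
      simp [Finset.mem_sdiff]
    have hcard : (Finset.univ \ G.neighborFinset a).card = n - G.degree a := by
      rw [Finset.card_sdiff_of_subset (Finset.subset_univ _)]
      simp [G.card_neighborFinset_eq_degree]
    exact Nat.sInf_le ⟨_, hdom, hcard⟩
  have hdegn : G.degree a ≤ n := by
    have := Finset.card_le_univ (G.neighborFinset a)
    simpa [G.card_neighborFinset_eq_degree] using this
  have hdegaB : (G.degree a : ℝ) ≤ B := by
    rw [hB]
    have h1 : (domNum G : ℝ) ≤ ((n - G.degree a : ℕ) : ℝ) := Nat.cast_le.mpr hdega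
    rw [Nat.cast_sub hdegn] at h1
    linarith
  have hdegbB : (G.degree b : ℝ) ≤ B :=
    le_trans (Nat.cast_le.mpr (ha b (Finset.mem_univ b))) hdegaB
  -- test vectors
  set one : Fin n → ℝ := fun _ => 1 with hone
  set x : Fin n → ℝ := fun v => (if v = a then (1:ℝ) else 0) - (if v = b then 1 else 0) with hx
  have hone0 : one ≠ 0 := by
    intro h
    have := congrFun h ⟨0, by omega⟩
    simp [hone] at this
  have hxa : x a = 1 := by simp [hx, (Ne.symm hba : a ≠ b)]
  have hxb : x b = -1 := by simp [hx, hba]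
  have hx0 : x ≠ 0 := by
    intro h
    have := congrFun h a
    rw [hxa] at this
    simp at this
  have hLone : L *ᵥ one = 0 := G.lapMatrix_mulVec_const_eq_zero
  have honeL : ∀ y : Fin n → ℝ, one ⬝ᵥ (L *ᵥ y) = 0 := by
    intro y
    rw [Matrix.dotProduct_mulVec, ← Matrix.mulVec_transpose, (G.isSymm_lapMatrix ℝ).eq, hLone]
    exact zero_dotProduct y
  have hsumx : ∑ v, x v = 0 := by
    simp [hx, Finset.sum_sub_distrib]
  have honex : one ⬝ᵥ x = 0 := by
    simpa [dotProduct, hone] using hsumx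
  have hxone : x ⬝ᵥ one = 0 := by
    simpa [dotProduct, hone] using hsumx
  have honeone : one ⬝ᵥ one = (n : ℝ) := by
    simp [dotProduct, hone]
  have hxsq : ∀ v, x v * x v = (if v = a then (1:ℝ) else 0) + (if v = b then 1 else 0) := by
    intro v
    by_cases h1 : v = a
    · by_cases h2 : v = b
      · exact absurd (h1.symm.trans h2) (Ne.symm hba)
      · simp [hx, h1, h2, (Ne.symm hba : a ≠ b)]
    · by_cases h2 : v = b <;> simp [hx, h1, h2, hba]
  have hxx : x ⬝ᵥ x = 2 := by
    simp only [dotProduct]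
    rw [Finset.sum_congr rfl fun v _ => hxsq v]
    rw [Finset.sum_add_distrib]
    simp
    norm_num
  -- x^T L x = deg a + deg b
  have hNa : ∑ u ∈ G.neighborFinset a, x u = 0 := by
    apply Finset.sum_eq_zero
    intro u hu
    rw [SimpleGraph.mem_neighborFinset] at hu
    have hua : u ≠ a := fun h => G.irrefl (h ▸ hu)
    have hub : u ≠ b := fun h => hnadj (h ▸ hu)
    simp [hx, hua, hub]
  have hNb : ∑ u ∈ G.neighborFinset b, x u = 0 := by
    apply Finset.sum_eq_zero
    intro u hu
    rw [SimpleGraph.mem_neighborFinset] at hu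
    have hub : u ≠ b := fun h => G.irrefl (h ▸ hu)
    have hua : u ≠ a := fun h => hnadj (G.adj_symm (h ▸ hu))
    simp [hx, hua, hub]
  have hLxa : (L *ᵥ x) a = G.degree a := by
    rw [hLdef, G.lapMatrix_mulVec_apply, hNa, hxa]
    ring
  have hLxb : (L *ᵥ x) b = -(G.degree b) := by
    rw [hLdef, G.lapMatrix_mulVec_apply, hNb, hxb]
    ring
  have hxLx : x ⬝ᵥ (L *ᵥ x) = (G.degree a : ℝ) + G.degree b := by
    simp only [dotProduct, hx, sub_mul, ite_mul, one_mul, zero_mul]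
    rw [Finset.sum_sub_distrib]
    rw [Finset.sum_ite_eq' Finset.univ a, Finset.sum_ite_eq' Finset.univ b]
    rw [← hx]
    simp [hLxa, hLxb]
  set U : Matrix (Fin n) (Fin n) ℝ := (hA.eigenvectorUnitary : Matrix (Fin n) (Fin n) ℝ) with hU
  have hcount : 2 ≤ (Finset.univ.filter (fun i => hA.eigenvalues i ≤ B)).card := by
    by_contra hlt
    push_neg at hlt
    have hcard : (Finset.univ.filter (fun i => hA.eigenvalues i ≤ B)).card ≤ 1 := by omega
    rcases Finset.eq_empty_or_nonempty (Finset.univ.filter (fun i => hA.eigenvalues i ≤ B))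
      with hS | ⟨i₀, hi₀⟩
    · have hk := my_key hA (B := B) hone0 (fun i hi => by
        have hmem : i ∈ Finset.univ.filter (fun j => hA.eigenvalues j ≤ B) :=
          Finset.mem_filter.mpr ⟨Finset.mem_univ i, hi⟩
        rw [hS] at hmem
        simp at hmem)
      rw [honeone, hLone, dotProduct_zero] at hk
      have hnn : (0:ℝ) ≤ B * n := mul_nonneg hB0 (by positivity)
      linarith
    · have huniq : ∀ i ∈ (Finset.univ.filter (fun i => hA.eigenvalues i ≤ B)), i = i₀ :=
        fun i hi => Finset.card_le_one.mp hcard i hi i₀ hi₀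
      set α : ℝ := (star U *ᵥ one) i₀ with hαdef
      set β : ℝ := (star U *ᵥ x) i₀ with hβdef
      by_cases h0 : α = 0 ∧ β = 0
      · have hk := my_key hA (B := B) hone0 (fun i hi => by
          have hii : i = i₀ := huniq i (Finset.mem_filter.mpr ⟨Finset.mem_univ i, hi⟩)
          rw [hii]
          exact h0.1)
        rw [honeone, hLone, dotProduct_zero] at hk
        have hnn : (0:ℝ) ≤ B * n := mul_nonneg hB0 (by positivity)
        linarith
      · set y : Fin n → ℝ := β • one - α • x with hy
        have hcy : star U *ᵥ y = β • (star U *ᵥ one) - α • (star U *ᵥ x) := by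
          rw [hy, Matrix.mulVec_sub, Matrix.mulVec_smul, Matrix.mulVec_smul]
        have hy0 : y ≠ 0 := by
          intro hz
          by_cases hβ0 : β = 0
          · have hα0 : α ≠ 0 := fun h => h0 ⟨h, hβ0⟩
            have hza := congrFun hz a
            simp [hy, hβ0, hxa, hone] at hza
            exact hα0 hza
          · have hsy : ∑ v, y v = β * n - α * (∑ v, x v) := by
              simp [hy, Finset.sum_sub_distrib, ← Finset.mul_sum, hone]
              ring
            rw [hz, hsumx] at hsy
            simp at hsy
            rcases hsy with h | h
            · exact hβ0 h
            · omega
        have hperp : ∀ i, hA.eigenvalues i ≤ B → (star U *ᵥ y) i = 0 := by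
          intro i hi
          have hii : i = i₀ := huniq i (Finset.mem_filter.mpr ⟨Finset.mem_univ i, hi⟩)
          rw [hii, hcy]
          simp [← hαdef, ← hβdef]
          ring
        have hk := my_key hA (B := B) hy0 hperp
        have hyy : y ⬝ᵥ y = β^2 * n + 2 * α^2 := by
          rw [hy]
          simp [dotProduct_sub, sub_dotProduct, dotProduct_smul, smul_dotProduct, honeone,
            honex, hxone, hxx, smul_eq_mul]
          ring
        have hLy : L *ᵥ y = β • (0 : Fin n → ℝ) - α • (L *ᵥ x) := by
          rw [hy, Matrix.mulVec_sub, Matrix.mulVec_smul, Matrix.mulVec_smul, hLone]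
        have hyLy : y ⬝ᵥ (L *ᵥ y) = α^2 * ((G.degree a : ℝ) + G.degree b) := by
          rw [hLy, hy]
          simp [dotProduct_sub, sub_dotProduct, dotProduct_smul, smul_dotProduct, honeL,
            hxLx, smul_eq_mul]
          ring
        rw [hyy, hyLy] at hk
        have hq : α^2 * ((G.degree a : ℝ) + G.degree b) ≤ α^2 * (2*B) := by
          apply mul_le_mul_of_nonneg_left _ (sq_nonneg α)
          linarith
        nlinarith [sq_nonneg β, mul_nonneg hB0 (sq_nonneg β),
          mul_nonneg (mul_nonneg hB0 (sq_nonneg β)) (show (0:ℝ) ≤ n by positivity)]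
  exact my_secondEig_le hA hcount
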